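/- Let A and B be 2×2 integer matrices with determinant ±1 (elements of GL(2,ℤ)). Suppose that A, regarded as a real matrix, has a real eigenvalue λ with |λ| > 1, and let v ∈ ℝ² be a nonzero eigenvector of A for λ. If B maps the line ℝ·v to itself (i.e., B v ∈ ℝ·v), then A B = B A. -/

import Mathlib

/-- Let `A, B ∈ GL(2,ℤ)`.  If `A` (as a real matrix) has a real eigenvalue `λ` with
`|λ| > 1` and eigenvector `v ≠ 0`, and `B` maps the line `ℝ·v` to itself, then
`A` and `B` commute. -/
theorem stmt10 (A B : Matrix (Fin 2) (Fin 2) ℤ)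
    (hA : IsUnit A.det) (hB : IsUnit B.det)
    (lam : ℝ) (hlam : 1 < |lam|)
    (v : Fin 2 → ℝ) (hv : v ≠ 0)
    (heig : (A.map (Int.cast : ℤ → ℝ)).mulVec v = lam • v)
    (hBv : ∃ c : ℝ, (B.map (Int.cast : ℤ → ℝ)).mulVec v = c • v) :
    A * B = B * A := by
  obtain ⟨e, hBe⟩ := hBv
  have e0 := congrFun heig 0
  have e1 := congrFun heig 1
  have f0 := congrFun hBe 0
  have f1 := congrFun hBe 1
  simp only [Matrix.mulVec, dotProduct, Fin.sum_univ_two, Matrix.map_apply,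
    Pi.smul_apply, smul_eq_mul] at e0 e1 f0 f1
  set a := A 0 0 with ha
  set b := A 0 1 with hb
  set c := A 1 0 with hc
  set d := A 1 1 with hd
  set p := B 0 0 with hp
  set q := B 0 1 with hq
  set r := B 1 0 with hr
  set s := B 1 1 with hs
  set x := v 0 with hx
  set y := v 1 with hy
  -- determinant of A is ±1
  have hdetA : a * d - b * c = 1 ∨ a * d - b * c = -1 := by
    rw [Matrix.det_fin_two] at hA
    exact Int.isUnit_iff.mp hA
  -- helper: lam cannot be the image of an integer unit ±1
  have hnotone : ∀ m : ℤ, IsUnit m → (m : ℝ) ≠ lam := by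
    intro m hm hmeq
    rcases Int.isUnit_iff.mp hm with h1 | h1 <;> subst h1 <;>
      rw [← hmeq] at hlam <;> norm_num at hlam
  -- y ≠ 0
  have hy0 : y ≠ 0 := by
    intro h0
    have hx0 : x ≠ 0 := by
      intro hx0
      apply hv
      funext i
      fin_cases i
      · exact hx0
      · exact h0
    rw [h0] at e0 e1
    simp only [mul_zero, add_zero] at e0 e1
    -- e0 : (a:ℝ) * x = lam * x, e1 : (c:ℝ) * x = lam * 0
    have hla : (a : ℝ) = lam := mul_right_cancel₀ hx0 (by linarith [e0] : (a:ℝ) * x = lam * x)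
    have hc0 : (c : ℝ) = 0 := by
      rcases mul_eq_zero.mp (by linarith [e1] : (c:ℝ) * x = 0) with h | h
      · exact h
      · exact absurd h hx0
    have hcz : c = 0 := by exact_mod_cast hc0
    have hua : IsUnit a := by
      rcases hdetA with h | h <;> rw [hcz] at h
      · exact IsUnit.of_mul_eq_one (a := a) d (by linarith)
      · exact IsUnit.of_mul_eq_one (a := a) (-d) (by linarith)
    exact hnotone a hua hla
  -- characteristic equation for lam
  have hchar : lam ^ 2 - ((a : ℝ) + d) * lam + ((a : ℝ) * d - b * c) = 0 := by
    have h8 : (lam ^ 2 - ((a : ℝ) + d) * lam + ((a : ℝ) * d - b * c)) * y = 0 * y := by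
      linear_combination (-(lam - (a:ℝ))) * e1 - (c:ℝ) * e0
    exact mul_right_cancel₀ hy0 h8
  -- lam is irrational
  have hirr : ∀ ρ : ℚ, (ρ : ℝ) ≠ lam := by
    intro ρ hρ
    have hqeq : ρ ^ 2 - ((a : ℚ) + d) * ρ + ((a : ℚ) * d - b * c) = 0 := by
      have h2 : ((ρ ^ 2 - ((a : ℚ) + d) * ρ + ((a : ℚ) * d - b * c) : ℚ) : ℝ) = 0 := by
        push_cast
        rw [hρ]
        linear_combination hchar
      exact_mod_cast h2
    have hint : IsIntegral ℤ ρ := by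
      refine ⟨Polynomial.X ^ 2 - Polynomial.C (a + d) * Polynomial.X
        + Polynomial.C (a * d - b * c), ?_, ?_⟩
      · monicity!
      · simp only [Polynomial.eval₂_add, Polynomial.eval₂_sub, Polynomial.eval₂_mul,
          Polynomial.eval₂_pow, Polynomial.eval₂_X, Polynomial.eval₂_C]
        have : (algebraMap ℤ ℚ) = (Int.cast : ℤ → ℚ) := rfl
        rw [this]
        push_cast
        linear_combination hqeq
    obtain ⟨m, hm⟩ := IsIntegrallyClosed.isIntegral_iff.mp hint
    have hmq : (m : ℚ) = ρ := by exact_mod_cast hm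
    have hmr : (m : ℝ) = lam := by
      rw [← hρ, ← hmq]
      push_cast
      ring
    have hmz : m ^ 2 - (a + d) * m + (a * d - b * c) = 0 := by
      have h3 := hqeq
      rw [← hmq] at h3
      exact_mod_cast h3
    have hfact : m * ((a + d) - m) = a * d - b * c := by linear_combination -hmz
    have hum : IsUnit m := by
      rcases hdetA with h | h
      · exact IsUnit.of_mul_eq_one (a := m) ((a + d) - m) (by rw [hfact, h])
      · exact IsUnit.of_mul_eq_one (a := m) (m - (a + d)) (by linear_combination -hfact - h)
    exact hnotone m hum hmr
  -- c ≠ 0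
  have hc0 : c ≠ 0 := by
    intro h0
    apply hirr (d : ℚ)
    have h9 : (d : ℝ) * y = lam * y := by
      rw [h0] at e1
      push_cast at e1
      linarith [e1]
    have := mul_right_cancel₀ hy0 h9
    push_cast
    exact this
  -- quadratic relations in x, y
  have R1 : (c : ℝ) * x ^ 2 - ((a : ℝ) - d) * x * y - (b : ℝ) * y ^ 2 = 0 := by
    linear_combination x * e1 - y * e0
  have R2 : (r : ℝ) * x ^ 2 + ((s : ℝ) - p) * x * y - (q : ℝ) * y ^ 2 = 0 := by
    linear_combination x * f1 - y * f0
  -- eliminate x^2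
  have hxy : ((c * (s - p) + r * (a - d) : ℤ) : ℝ) * x * y
      + ((r * b - c * q : ℤ) : ℝ) * y * y = 0 := by
    push_cast
    linear_combination (c : ℝ) * R2 - (r : ℝ) * R1
  set u : ℤ := c * (s - p) + r * (a - d) with hudef
  set w : ℤ := r * b - c * q with hwdef
  have hkey : (u : ℝ) * x + (w : ℝ) * y = 0 := by
    have h10 : ((u : ℝ) * x + (w : ℝ) * y) * y = 0 * y := by linear_combination hxy
    exact mul_right_cancel₀ hy0 h10
  have hu : u = 0 := by
    by_contra hne
    have hur : ((u : ℤ) : ℝ) ≠ 0 := Int.cast_ne_zero.mpr hne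
    apply hirr ((d : ℚ) - (c : ℚ) * w / u)
    have h7 : ((u : ℝ) * (lam - (d : ℝ))) * y = (-(c : ℝ) * (w : ℝ)) * y := by
      linear_combination (c : ℝ) * hkey - (u : ℝ) * e1
    have h6 := mul_right_cancel₀ hy0 h7
    have h5 : (c : ℝ) * (w : ℝ) / (u : ℝ) = (d : ℝ) - lam := by
      rw [div_eq_iff hur]
      linear_combination h6
    push_cast
    push_cast at h5
    linarith [h5]
  have hw : w = 0 := by
    have h2 : (w : ℝ) * y = 0 := by
      rw [hu] at hkey
      push_cast at hkey
      linarith [hkey]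
    rcases mul_eq_zero.mp h2 with h | h
    · exact_mod_cast h
    · exact absurd h hy0
  rw [hudef] at hu
  rw [hwdef] at hw
  -- third identity
  have hqad : q * (a - d) = b * (p - s) := by
    have h3 : c * (q * (a - d)) = c * (b * (p - s)) := by
      linear_combination b * hu - (a - d) * hw
    exact mul_left_cancel₀ hc0 h3
  -- conclude
  ext i j
  fin_cases i <;> fin_cases j <;>
    simp only [Matrix.mul_apply, Fin.sum_univ_two, Fin.mk_zero, Fin.mk_one, Fin.isValue] <;>
    simp only [← ha, ← hb, ← hc, ← hd, ← hp, ← hq, ← hr, ← hs]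
  · linear_combination hw
  · linear_combination hqad
  · linear_combination -hu
  · linear_combination -hw
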